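/- Let Q1 and Q2 be probability measures on the real line with distribution functions G1 and G2, and suppose Q2 is absolutely continuous with respect to Q1. Then Q1 ≤_lr Q2 if and only if the ordinal dominance curve H(α) := G2(G1^{-1}(α)) is convex on the image G1([−∞,∞]) = {G1(y) : y ∈ [−∞,∞]}, i.e. for all r < s < t in G1([−∞,∞]), (H(s) − H(r))/(s − r) ≤ (H(t) − H(s))/(t − s). -/

import Mathlib

open MeasureTheory Set Filter

noncomputable section

/-- `g` is a (measurable, nonnegative) density of `Q` with respect to `μ`,
i.e. `Q B = ∫_B g dμ` for all Borel sets `B`. -/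
def IsDensity (Q μ : Measure ℝ) (g : ℝ → ENNReal) : Prop :=
  Measurable g ∧ ∀ B : Set ℝ, MeasurableSet B → Q B = ∫⁻ x in B, g x ∂μ

/-- Likelihood ratio order `Q1 ≤_lr Q2`: there exist a σ-finite measure `μ` and densities
`g1 = dQ1/dμ`, `g2 = dQ2/dμ` such that the ratio `g2/g1` (with values in `[0,∞]`)
is nondecreasing on the set `{g1 + g2 > 0}`. -/
def LikelihoodRatioLE (Q1 Q2 : Measure ℝ) : Prop :=
  ∃ (μ : Measure ℝ) (g1 g2 : ℝ → ENNReal), SigmaFinite μ ∧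
    IsDensity Q1 μ g1 ∧ IsDensity Q2 μ g2 ∧
    ∀ x y : ℝ, x ≤ y → 0 < g1 x + g2 x → 0 < g1 y + g2 y →
      g2 x / g1 x ≤ g2 y / g1 y

/-- The distribution function of `Q` extended to the extended real line:
`G(y) = Q({x : x ≤ y})`, so that `G(⊥) = 0` and `G(⊤) = 1` for a probability measure. -/
def cdfE (Q : Measure ℝ) : EReal → ℝ :=
  fun y => (Q {x : ℝ | (x : EReal) ≤ y}).toReal

/-- The generalized inverse `G⁻¹(α) = min{y ∈ [-∞,∞] : G(y) ≥ α}`. -/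
def quantE (Q : Measure ℝ) (α : ℝ) : EReal :=
  sInf {y : EReal | α ≤ cdfE Q y}

section Helpers

open Metric Topology

variable {Q Q1 Q2 : Measure ℝ}


lemma setE_bot : {x : ℝ | (x : EReal) ≤ (⊥ : EReal)} = ∅ := by
  ext x; simp

lemma setE_top : {x : ℝ | (x : EReal) ≤ (⊤ : EReal)} = univ := by
  ext x; simp [le_top]

lemma setE_coe (r : ℝ) : {x : ℝ | (x : EReal) ≤ (r : EReal)} = Iic r := by
  ext x; simp [EReal.coe_le_coe_iff]

lemma meas_setE (y : EReal) : MeasurableSet {x : ℝ | (x : EReal) ≤ y} := by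
  induction y using EReal.rec with
  | bot => rw [setE_bot]; exact MeasurableSet.empty
  | coe r => rw [setE_coe]; exact measurableSet_Iic
  | top => rw [setE_top]; exact MeasurableSet.univ

lemma cdfE_bot : cdfE Q ⊥ = 0 := by simp [cdfE, setE_bot]

lemma cdfE_top [IsProbabilityMeasure Q] : cdfE Q ⊤ = 1 := by
  simp [cdfE, setE_top]

lemma cdfE_coe (r : ℝ) : cdfE Q (r : EReal) = (Q (Iic r)).toReal := by
  unfold cdfE; rw [setE_coe]

lemma cdfE_mono [IsFiniteMeasure Q] : Monotone (cdfE Q) := by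
  intro y y' h
  exact ENNReal.toReal_mono (measure_ne_top _ _)
    (measure_mono (fun x hx => le_trans hx h))

lemma cdfE_nonneg (y : EReal) : 0 ≤ cdfE Q y := ENNReal.toReal_nonneg

lemma le_cdfE_quantE [IsProbabilityMeasure Q] {α : ℝ} (hr : α ∈ Set.range (cdfE Q)) :
    α ≤ cdfE Q (quantE Q α) := by
  obtain ⟨y0, hy0⟩ := hr
  set S := {y : EReal | α ≤ cdfE Q y} with hS
  have hy0S : y0 ∈ S := hy0.ge
  rw [quantE, ← hS]
  by_cases hb : sInf S = ⊥
  · rw [hb, cdfE_bot]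
    have key : ∀ n : ℕ, α ≤ (Q (Iic (-(n:ℝ)))).toReal := by
      intro n
      have hlt : sInf S < ((-(n:ℝ)) : EReal) := by
        rw [hb]; exact bot_lt_iff_ne_bot.mpr (EReal.coe_ne_bot _)
      obtain ⟨y, hyS, hy⟩ := sInf_lt_iff.mp hlt
      calc α ≤ cdfE Q y := hyS
        _ ≤ cdfE Q ((-(n:ℝ)) : EReal) := cdfE_mono hy.le
        _ = _ := cdfE_coe _
    have h1 : Tendsto (fun n : ℕ => Q (Iic (-(n:ℝ)))) atTop
        (𝓝 (Q (⋂ n : ℕ, Iic (-(n:ℝ))))) :=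
      tendsto_measure_iInter_atTop (fun _ => measurableSet_Iic.nullMeasurableSet)
        (fun m n h => Iic_subset_Iic.mpr (by exact_mod_cast neg_le_neg (Nat.cast_le.mpr h)))
        ⟨0, measure_ne_top _ _⟩
    have h2 : (⋂ n : ℕ, Iic (-(n:ℝ))) = ∅ := by
      ext z
      simp only [mem_iInter, mem_Iic, mem_empty_iff_false, iff_false, not_forall, not_le]
      obtain ⟨n, hn⟩ := exists_nat_gt (-z)
      exact ⟨n, by linarith⟩
    rw [h2, measure_empty] at h1
    have h3 : Tendsto (fun n : ℕ => (Q (Iic (-(n:ℝ)))).toReal) atTop (𝓝 0) := by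
      simpa [Function.comp_def] using (ENNReal.tendsto_toReal (by simp)).comp h1
    exact ge_of_tendsto' h3 key
  · by_cases ht : sInf S = ⊤
    · rw [ht, cdfE_top]
      calc α = cdfE Q y0 := hy0.symm
        _ ≤ cdfE Q ⊤ := cdfE_mono le_top
        _ = 1 := cdfE_top
    · set r := (sInf S).toReal with hrdef
      have hco : ((r : ℝ) : EReal) = sInf S := EReal.coe_toReal ht hb
      have key : ∀ n : ℕ, α ≤ (Q (Iic (r + 1/(n+1)))).toReal := by
        intro n
        have hlt : sInf S < ((r + 1/(n+1) : ℝ) : EReal) := by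
          rw [← hco]
          exact_mod_cast lt_add_of_pos_right r (by positivity : (0:ℝ) < 1/((n:ℝ)+1))
        obtain ⟨y, hyS, hy⟩ := sInf_lt_iff.mp hlt
        calc α ≤ cdfE Q y := hyS
          _ ≤ cdfE Q _ := cdfE_mono hy.le
          _ = _ := cdfE_coe _
      have h1 : Tendsto (fun n : ℕ => Q (Iic (r + 1/(n+1)))) atTop
          (𝓝 (Q (⋂ n : ℕ, Iic (r + 1/(n+1))))) :=
        tendsto_measure_iInter_atTop (fun _ => measurableSet_Iic.nullMeasurableSet)
          (fun m n h => Iic_subset_Iic.mpr (by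
            have : (1:ℝ)/(n+1) ≤ 1/(m+1) := by
              apply one_div_le_one_div_of_le (by positivity)
              exact_mod_cast Nat.add_le_add_right h 1
            linarith))
          ⟨0, measure_ne_top _ _⟩
      have h2 : (⋂ n : ℕ, Iic (r + 1/(n+1))) = Iic r := by
        ext z
        simp only [mem_iInter, mem_Iic]
        constructor
        · intro h
          by_contra hz
          push_neg at hz
          obtain ⟨n, hn⟩ := exists_nat_one_div_lt (by linarith : (0:ℝ) < z - r)
          have := h n
          linarith
        · intro h n
          have : (0:ℝ) < 1/(n+1) := by positivity
          linarith
      rw [h2] at h1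
      have h3 : Tendsto (fun n : ℕ => (Q (Iic (r + 1/(n+1)))).toReal) atTop
          (𝓝 (Q (Iic r)).toReal) :=
        (ENNReal.tendsto_toReal (measure_ne_top _ _)).comp h1
      have h4 : α ≤ (Q (Iic r)).toReal := ge_of_tendsto' h3 key
      rw [← hco, cdfE_coe]
      exact h4

lemma cdfE_quantE [IsProbabilityMeasure Q] {α : ℝ} (hr : α ∈ Set.range (cdfE Q)) :
    cdfE Q (quantE Q α) = α := by
  obtain ⟨y0, hy0⟩ := hr
  refine le_antisymm ?_ (le_cdfE_quantE ⟨y0, hy0⟩)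
  calc cdfE Q (quantE Q α) ≤ cdfE Q y0 := cdfE_mono (sInf_le hy0.ge)
    _ = α := hy0

lemma setE_subset {a b : EReal} (h : a ≤ b) :
    {x : ℝ | (x : EReal) ≤ a} ⊆ {x : ℝ | (x : EReal) ≤ b} :=
  fun x hx => le_trans hx h

lemma quantE_mono : Monotone (quantE Q) := fun α β h =>
  sInf_le_sInf (fun y hy => le_trans h hy)

lemma measure_diff_setE [IsFiniteMeasure Q] {a b : EReal} (h : a ≤ b) :
    (Q ({x : ℝ | (x : EReal) ≤ b} \ {x : ℝ | (x : EReal) ≤ a})).toReal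
      = cdfE Q b - cdfE Q a := by
  have hsub : {x : ℝ | (x : EReal) ≤ a} ⊆ {x : ℝ | (x : EReal) ≤ b} := setE_subset h
  have hun : {x : ℝ | (x : EReal) ≤ a} ∪
      ({x : ℝ | (x : EReal) ≤ b} \ {x : ℝ | (x : EReal) ≤ a})
      = {x : ℝ | (x : EReal) ≤ b} := union_diff_cancel hsub
  have hd : Disjoint {x : ℝ | (x : EReal) ≤ a}
      ({x : ℝ | (x : EReal) ≤ b} \ {x : ℝ | (x : EReal) ≤ a}) := disjoint_sdiff_right
  have := measure_union (μ := Q) hd ((meas_setE b).diff (meas_setE a))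
  rw [hun] at this
  have h2 : cdfE Q b = cdfE Q a +
      (Q ({x : ℝ | (x : EReal) ≤ b} \ {x : ℝ | (x : EReal) ≤ a})).toReal := by
    unfold cdfE
    rw [this, ENNReal.toReal_add (measure_ne_top _ _) (measure_ne_top _ _)]
  linarith

lemma measure_diff_setE' [IsFiniteMeasure Q] {a b : EReal} (h : a ≤ b) :
    Q ({x : ℝ | (x : EReal) ≤ b} \ {x : ℝ | (x : EReal) ≤ a})
      = ENNReal.ofReal (cdfE Q b - cdfE Q a) := by
  rw [← measure_diff_setE (Q := Q) h, ENNReal.ofReal_toReal (measure_ne_top _ _)]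

lemma measure_Ioc_toReal [IsFiniteMeasure Q] {p q : ℝ} (h : p ≤ q) :
    (Q (Ioc p q)).toReal = cdfE Q (q : EReal) - cdfE Q (p : EReal) := by
  have := measure_diff_setE (Q := Q) (EReal.coe_le_coe_iff.mpr h)
  have he : {x : ℝ | (x : EReal) ≤ (q:EReal)} \ {x : ℝ | (x : EReal) ≤ (p:EReal)} = Ioc p q := by
    ext x
    simp [EReal.coe_le_coe_iff, and_comm]
  rwa [he] at this

lemma measure_Ioc_eq [IsFiniteMeasure Q] {p q : ℝ} (h : p ≤ q) :
    Q (Ioc p q) = ENNReal.ofReal (cdfE Q (q : EReal) - cdfE Q (p : EReal)) := by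
  rw [← measure_Ioc_toReal (Q := Q) h, ENNReal.ofReal_toReal (measure_ne_top _ _)]

/-- `H ∘ G1 = G2` : the key consequence of absolute continuity. -/
lemma cdfE_quantE_cdfE [IsProbabilityMeasure Q1] [IsProbabilityMeasure Q2]
    (hac : Q2 ≪ Q1) (y : EReal) :
    cdfE Q2 (quantE Q1 (cdfE Q1 y)) = cdfE Q2 y := by
  set m := quantE Q1 (cdfE Q1 y) with hm
  have hmem : y ∈ {z : EReal | cdfE Q1 y ≤ cdfE Q1 z} := by show cdfE Q1 y ≤ cdfE Q1 y; exact le_refl _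
  have hmy : m ≤ y := sInf_le hmem
  have h1 : cdfE Q1 m = cdfE Q1 y := cdfE_quantE ⟨y, rfl⟩
  -- the difference set is Q1-null
  have hnull : Q1 ({x : ℝ | (x : EReal) ≤ y} \ {x : ℝ | (x : EReal) ≤ m}) = 0 := by
    rw [measure_diff_setE' (Q := Q1) hmy, h1, sub_self, ENNReal.ofReal_zero]
  have hnull2 : Q2 ({x : ℝ | (x : EReal) ≤ y} \ {x : ℝ | (x : EReal) ≤ m}) = 0 := hac hnull
  
  have h2 : (Q2 ({x : ℝ | (x : EReal) ≤ y} \ {x : ℝ | (x : EReal) ≤ m})).toReal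
      = cdfE Q2 y - cdfE Q2 m := measure_diff_setE hmy
  rw [hnull2] at h2
  simp at h2
  linarith

theorem key_ineq [IsProbabilityMeasure Q1] [IsProbabilityMeasure Q2] (hac : Q2 ≪ Q1)
    (hconv : ∀ r s t : ℝ, r ∈ Set.range (cdfE Q1) → s ∈ Set.range (cdfE Q1) →
      t ∈ Set.range (cdfE Q1) → r < s → s < t →
      (cdfE Q2 (quantE Q1 s) - cdfE Q2 (quantE Q1 r)) / (s - r) ≤
        (cdfE Q2 (quantE Q1 t) - cdfE Q2 (quantE Q1 s)) / (t - s))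
    {p q u v : ℝ} (hpq : p ≤ q) (hqu : q ≤ u) (huv : u ≤ v) :
    Q2 (Ioc p q) * Q1 (Ioc u v) ≤ Q2 (Ioc u v) * Q1 (Ioc p q) := by
  set H : ℝ → ℝ := fun α => cdfE Q2 (quantE Q1 α) with hH
  set r0 := cdfE Q1 (p : EReal) with hr0
  set s0 := cdfE Q1 (q : EReal) with hs0
  set t0 := cdfE Q1 (u : EReal) with ht0
  set w0 := cdfE Q1 (v : EReal) with hw0
  have hrs : r0 ≤ s0 := cdfE_mono (EReal.coe_le_coe_iff.mpr hpq)
  have hst : s0 ≤ t0 := cdfE_mono (EReal.coe_le_coe_iff.mpr hqu)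
  have htw : t0 ≤ w0 := cdfE_mono (EReal.coe_le_coe_iff.mpr huv)
  have hHr : H r0 = cdfE Q2 (p : EReal) := cdfE_quantE_cdfE hac _
  have hHs : H s0 = cdfE Q2 (q : EReal) := cdfE_quantE_cdfE hac _
  have hHt : H t0 = cdfE Q2 (u : EReal) := cdfE_quantE_cdfE hac _
  have hHw : H w0 = cdfE Q2 (v : EReal) := cdfE_quantE_cdfE hac _
  have h2m : Monotone (cdfE Q2) := cdfE_mono
  have hn1 : 0 ≤ H s0 - H r0 := by
    rw [hHr, hHs]; exact sub_nonneg.mpr (h2m (EReal.coe_le_coe_iff.mpr hpq))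
  have hn2 : 0 ≤ H t0 - H s0 := by
    rw [hHt, hHs]; exact sub_nonneg.mpr (h2m (EReal.coe_le_coe_iff.mpr hqu))
  have hn3 : 0 ≤ H w0 - H t0 := by
    rw [hHw, hHt]; exact sub_nonneg.mpr (h2m (EReal.coe_le_coe_iff.mpr huv))
  have e1 : Q2 (Ioc p q) = ENNReal.ofReal (H s0 - H r0) := by
    rw [measure_Ioc_eq hpq, hHr, hHs]
  have e2 : Q2 (Ioc u v) = ENNReal.ofReal (H w0 - H t0) := by
    rw [measure_Ioc_eq huv, hHt, hHw]
  have e3 : Q1 (Ioc p q) = ENNReal.ofReal (s0 - r0) := measure_Ioc_eq hpq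
  have e4 : Q1 (Ioc u v) = ENNReal.ofReal (w0 - t0) := measure_Ioc_eq huv
  rw [e1, e2, e3, e4, ← ENNReal.ofReal_mul hn1, ← ENNReal.ofReal_mul hn3]
  apply ENNReal.ofReal_le_ofReal
  -- now a real inequality
  rcases eq_or_lt_of_le hrs with heq1 | hlt1
  · rw [← heq1]; simp
  rcases eq_or_lt_of_le htw with heq2 | hlt2
  · rw [← heq2]
    simp only [sub_self, mul_zero]
    exact mul_nonneg (by linarith) (by linarith)
  rcases eq_or_lt_of_le hst with heq3 | hlt3
  · have h := hconv r0 s0 w0 ⟨(p:EReal), rfl⟩ ⟨(q:EReal), rfl⟩ ⟨(v:EReal), rfl⟩ hlt1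
      (by rw [heq3]; exact hlt2)
    rw [div_le_div_iff₀ (by linarith) (by rw [heq3] at *; linarith)] at h
    rw [← heq3]
    nlinarith [h]
  · have h1 := hconv r0 s0 t0 ⟨(p:EReal), rfl⟩ ⟨(q:EReal), rfl⟩ ⟨(u:EReal), rfl⟩ hlt1 hlt3
    have h2 := hconv s0 t0 w0 ⟨(q:EReal), rfl⟩ ⟨(u:EReal), rfl⟩ ⟨(v:EReal), rfl⟩ hlt3 hlt2
    rw [div_le_div_iff₀ (by linarith) (by linarith)] at h1
    rw [div_le_div_iff₀ (by linarith) (by linarith)] at h2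
    have e5 := mul_le_mul_of_nonneg_right h1 (by linarith : (0:ℝ) ≤ w0 - t0)
    have e6 := mul_le_mul_of_nonneg_right h2 (by linarith : (0:ℝ) ≤ s0 - r0)
    have : (H s0 - H r0) * (w0 - t0) * (t0 - s0) ≤ (H w0 - H t0) * (s0 - r0) * (t0 - s0) := by
      nlinarith [e5, e6]
    exact le_of_mul_le_mul_right (by linarith) (by linarith : (0:ℝ) < t0 - s0)

theorem forward_dir [IsProbabilityMeasure Q1] [IsProbabilityMeasure Q2]
    (hlr : LikelihoodRatioLE Q1 Q2) :
    (∀ r s t : ℝ, r ∈ Set.range (cdfE Q1) → s ∈ Set.range (cdfE Q1) →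
      t ∈ Set.range (cdfE Q1) → r < s → s < t →
      (cdfE Q2 (quantE Q1 s) - cdfE Q2 (quantE Q1 r)) / (s - r) ≤
        (cdfE Q2 (quantE Q1 t) - cdfE Q2 (quantE Q1 s)) / (t - s)) := by
  obtain ⟨μ, g1, g2, hσ, ⟨hg1m, hg1⟩, ⟨hg2m, hg2⟩, hmono⟩ := hlr
  intro r s t hr hs ht hrs hst
  set a := quantE Q1 r with ha
  set b := quantE Q1 s with hb
  set c := quantE Q1 t with hc
  have hab : a ≤ b := quantE_mono hrs.le
  have hbc : b ≤ c := quantE_mono hst.le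
  have hG1a : cdfE Q1 a = r := cdfE_quantE hr
  have hG1b : cdfE Q1 b = s := cdfE_quantE hs
  have hG1c : cdfE Q1 c = t := cdfE_quantE ht
  set A := {x : ℝ | (x : EReal) ≤ b} \ {x : ℝ | (x : EReal) ≤ a} with hA
  set B := {x : ℝ | (x : EReal) ≤ c} \ {x : ℝ | (x : EReal) ≤ b} with hB
  have hAm : MeasurableSet A := (meas_setE b).diff (meas_setE a)
  have hBm : MeasurableSet B := (meas_setE c).diff (meas_setE b)
  have hQ1A : (Q1 A).toReal = s - r := by
    rw [hA, measure_diff_setE hab, hG1b, hG1a]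
  have hQ1B : (Q1 B).toReal = t - s := by
    rw [hB, measure_diff_setE hbc, hG1c, hG1b]
  -- a.e. finiteness
  have hμ1 : ∫⁻ x, g1 x ∂μ = 1 := by
    have := hg1 univ MeasurableSet.univ
    rw [measure_univ, setLIntegral_univ] at this
    exact this.symm
  have hμ2 : ∫⁻ x, g2 x ∂μ = 1 := by
    have := hg2 univ MeasurableSet.univ
    rw [measure_univ, setLIntegral_univ] at this
    exact this.symm
  have hae1 : ∀ᵐ x ∂μ, g1 x < ⊤ := ae_lt_top hg1m (by rw [hμ1]; exact ENNReal.one_ne_top)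
  have hae2 : ∀ᵐ x ∂μ, g2 x < ⊤ := ae_lt_top hg2m (by rw [hμ2]; exact ENNReal.one_ne_top)
  -- pointwise cross inequality
  have pw : ∀ x y : ℝ, x ≤ y → g1 x ≠ ⊤ → g2 x ≠ ⊤ → g1 y ≠ ⊤ → g2 y ≠ ⊤ →
      g2 x * g1 y ≤ g1 x * g2 y := by
    intro x y hxy h1xt h2xt h1yt h2yt
    by_cases hx0 : g1 x + g2 x = 0
    · obtain ⟨-, h2⟩ := add_eq_zero.mp hx0
      rw [h2, zero_mul]; exact zero_le
    by_cases hy0 : g1 y + g2 y = 0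
    · obtain ⟨h1, -⟩ := add_eq_zero.mp hy0
      rw [h1, mul_zero]; exact zero_le
    have hdiv := hmono x y hxy (pos_iff_ne_zero.mpr hx0) (pos_iff_ne_zero.mpr hy0)
    by_cases h1x : g1 x = 0
    · have h2x : g2 x ≠ 0 := by intro h; exact hx0 (by rw [h1x, h, add_zero])
      have hdt : g2 x / g1 x = ⊤ := by rw [h1x]; exact ENNReal.div_zero h2x
      rw [hdt, top_le_iff] at hdiv
      rcases ENNReal.div_eq_top.mp hdiv with ⟨-, h10⟩ | ⟨h2t, -⟩
      · rw [h10, mul_zero]; exact zero_le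
      · exact absurd h2t h2yt
    · by_cases h1y : g1 y = 0
      · rw [h1y, mul_zero]; exact zero_le
      · calc g2 x * g1 y = g2 x / g1 x * g1 x * g1 y := by
              rw [ENNReal.div_mul_cancel h1x h1xt]
          _ ≤ g2 y / g1 y * g1 x * g1 y := by gcongr
          _ = g2 y / g1 y * g1 y * g1 x := by ring
          _ = g2 y * g1 x := by rw [ENNReal.div_mul_cancel h1y h1yt]
          _ = g1 x * g2 y := mul_comm _ _
  -- integral cross inequality
  have key : Q2 A * Q1 B ≤ Q2 B * Q1 A := by
    rw [hg2 A hAm, hg1 B hBm, hg2 B hBm, hg1 A hAm]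
    calc (∫⁻ x in A, g2 x ∂μ) * ∫⁻ y in B, g1 y ∂μ
        = ∫⁻ x in A, g2 x * ∫⁻ y in B, g1 y ∂μ ∂μ := by
          rw [lintegral_mul_const _ hg2m]
      _ ≤ ∫⁻ x in A, g1 x * ∫⁻ y in B, g2 y ∂μ ∂μ := by
          apply lintegral_mono_ae
          filter_upwards [ae_restrict_of_ae hae1, ae_restrict_of_ae hae2,
            ae_restrict_mem hAm] with x hx1 hx2 hxA
          rw [← lintegral_const_mul _ hg1m, ← lintegral_const_mul _ hg2m]
          apply lintegral_mono_ae
          filter_upwards [ae_restrict_of_ae hae1, ae_restrict_of_ae hae2,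
            ae_restrict_mem hBm] with y hy1 hy2 hyB
          have hxy : x ≤ y := by
            have hx : (x : EReal) ≤ b := hxA.1
            have hy : ¬((y : EReal) ≤ b) := hyB.2
            have : (x : EReal) ≤ (y : EReal) := hx.trans (not_le.mp hy).le
            exact_mod_cast this
          exact pw x y hxy hx1.ne hx2.ne hy1.ne hy2.ne
      _ = (∫⁻ x in A, g1 x ∂μ) * ∫⁻ y in B, g2 y ∂μ := by
          rw [lintegral_mul_const _ hg1m]
      _ = (∫⁻ y in B, g2 y ∂μ) * ∫⁻ x in A, g1 x ∂μ := mul_comm _ _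
  -- conclude in the reals
  rw [div_le_div_iff₀ (by linarith) (by linarith)]
  have h1 : cdfE Q2 b - cdfE Q2 a = (Q2 A).toReal := (measure_diff_setE hab).symm
  have h2 : cdfE Q2 c - cdfE Q2 b = (Q2 B).toReal := (measure_diff_setE hbc).symm
  rw [h1, h2, ← hQ1A, ← hQ1B, ← ENNReal.toReal_mul, ← ENNReal.toReal_mul]
  exact ENNReal.toReal_mono (ENNReal.mul_ne_top (measure_ne_top _ _) (measure_ne_top _ _)) key

lemma iInter_Ioc_seq {c d : ℝ} (h : c ≤ d) :
    (⋂ n : ℕ, Ioc (c - 1/(n+1)) d) = Icc c d := by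
  ext z
  simp only [mem_iInter, mem_Ioc, mem_Icc]
  constructor
  · intro hz
    refine ⟨?_, (hz 0).2⟩
    by_contra hc
    push_neg at hc
    obtain ⟨n, hn⟩ := exists_nat_one_div_lt (by linarith : (0:ℝ) < c - z)
    have := (hz n).1
    push_cast at hn this ⊢
    linarith
  · intro hz n
    have : (0:ℝ) < 1/(n+1) := by positivity
    exact ⟨by linarith [hz.1], hz.2⟩

lemma tendsto_Ioc_Icc (Q : Measure ℝ) [IsFiniteMeasure Q] {c d : ℝ} (h : c ≤ d) :
    Tendsto (fun n : ℕ => Q (Ioc (c - 1/(n+1)) d)) atTop (𝓝 (Q (Icc c d))) := by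
  have h1 := tendsto_measure_iInter_atTop (μ := Q)
    (s := fun n : ℕ => Ioc (c - 1/(n+1)) d)
    (fun n => measurableSet_Ioc.nullMeasurableSet)
    (fun m n hmn => Ioc_subset_Ioc (by
      have h2 : (1:ℝ)/(n+1) ≤ 1/(m+1) := by
        apply one_div_le_one_div_of_le (by positivity)
        exact_mod_cast Nat.add_le_add_right hmn 1
      linarith) le_rfl)
    ⟨0, measure_ne_top _ _⟩
  rwa [iInter_Ioc_seq h] at h1

lemma ennreal_div_le_div {a b c d : ENNReal} (h : a * d ≤ c * b)
    (hb0 : b ≠ 0) (hbt : b ≠ ⊤) (hd0 : d ≠ 0) (hdt : d ≠ ⊤) :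
    a / b ≤ c / d := by
  rw [ENNReal.div_le_iff_le_mul (Or.inl hb0) (Or.inl hbt)]
  have e : c / d * b = c * b / d := by
    rw [div_eq_mul_inv, div_eq_mul_inv, mul_right_comm]
  rw [e, ENNReal.le_div_iff_mul_le (Or.inl hd0) (Or.inl hdt)]
  exact h

lemma meas_inter_full {Q : Measure ℝ} {S : Set ℝ} (h : Q Sᶜ = 0) (B : Set ℝ) :
    Q (S ∩ B) = Q B := by
  apply le_antisymm (measure_mono inter_subset_right)
  calc Q B ≤ Q (S ∩ B) + Q (B \ S) := by
        rw [inter_comm]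
        exact le_trans (measure_mono (by intro x hx; by_cases h : x ∈ S <;> simp [hx, h]))
          (measure_union_le _ _)
    _ ≤ Q (S ∩ B) + Q Sᶜ := by
        gcongr
        intro x hx
        exact hx.2
    _ = Q (S ∩ B) := by rw [h, add_zero]

theorem reverse_dir [IsProbabilityMeasure Q1] [IsProbabilityMeasure Q2] (hac : Q2 ≪ Q1)
    (hconv : ∀ r s t : ℝ, r ∈ Set.range (cdfE Q1) → s ∈ Set.range (cdfE Q1) →
      t ∈ Set.range (cdfE Q1) → r < s → s < t →
      (cdfE Q2 (quantE Q1 s) - cdfE Q2 (quantE Q1 r)) / (s - r) ≤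
        (cdfE Q2 (quantE Q1 t) - cdfE Q2 (quantE Q1 s)) / (t - s)) :
    LikelihoodRatioLE Q1 Q2 := by
  classical
  set f := Q2.rnDeriv Q1 with hf
  -- the thick set
  set U : Set ℝ := ⋃ (p : ℚ) (q : ℚ) (_ : Q1 (Ioo (p:ℝ) (q:ℝ)) = 0), Ioo (p:ℝ) (q:ℝ) with hU
  have hUm : MeasurableSet U :=
    MeasurableSet.iUnion fun p => MeasurableSet.iUnion fun q =>
      MeasurableSet.iUnion fun _ => measurableSet_Ioo
  have hU0 : Q1 U = 0 :=
    measure_iUnion_null fun p => measure_iUnion_null fun q => measure_iUnion_null fun h => h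
  have hthick : ∀ x ∉ U, ∀ δ : ℝ, 0 < δ → Q1 (Ioo (x - δ) (x + δ)) ≠ 0 := by
    intro x hx δ hδ h0
    obtain ⟨p, hp1, hp2⟩ := exists_rat_btwn (by linarith : x - δ < x)
    obtain ⟨q, hq1, hq2⟩ := exists_rat_btwn (by linarith : x < x + δ)
    have hsub : Ioo (p:ℝ) (q:ℝ) ⊆ Ioo (x - δ) (x + δ) :=
      Ioo_subset_Ioo hp1.le hq2.le
    have : Q1 (Ioo (p:ℝ) (q:ℝ)) = 0 := measure_mono_null hsub h0
    exact hx (mem_iUnion.mpr ⟨p, mem_iUnion.mpr ⟨q, mem_iUnion.mpr ⟨this, hp2, hq1⟩⟩⟩)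
  -- Besicovitch differentiation
  have hbes := Besicovitch.ae_tendsto_rnDeriv Q2 Q1
  set N := {x : ℝ | ¬ Tendsto (fun r => Q2 (closedBall x r) / Q1 (closedBall x r))
      (𝓝[>] 0) (𝓝 (f x))} with hN
  have hN0 : Q1 N = 0 := by
    rw [hN]
    exact hbes
  set T := toMeasurable Q1 N with hT
  have hTm : MeasurableSet T := measurableSet_toMeasurable _ _
  have hT0 : Q1 T = 0 := by rw [hT, measure_toMeasurable]; exact hN0
  set S := (T ∪ U)ᶜ with hS
  have hSm : MeasurableSet S := (hTm.union hUm).compl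
  have hSc : Q1 Sᶜ = 0 := by
    rw [hS, compl_compl]
    exact measure_union_null hT0 hU0
  have hSc2 : Q2 Sᶜ = 0 := hac hSc
  have hP : ∀ x ∈ S, Tendsto (fun r => Q2 (closedBall x r) / Q1 (closedBall x r))
      (𝓝[>] 0) (𝓝 (f x)) := by
    intro x hxS
    by_contra h
    exact hxS (Or.inl (subset_toMeasurable Q1 N h))
  -- monotonicity of f on S
  have hmonoS : ∀ x ∈ S, ∀ y ∈ S, x < y → f x ≤ f y := by
    intro x hxS y hyS hxy
    have hxU : x ∉ U := fun h => hxS (Or.inr h)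
    have hyU : y ∉ U := fun h => hyS (Or.inr h)
    refine le_of_tendsto_of_tendsto (hP x hxS) (hP y hyS) ?_
    have hmem : Ioo (0:ℝ) ((y - x)/2) ∈ 𝓝[>] (0:ℝ) :=
      Ioo_mem_nhdsGT (by linarith)
    filter_upwards [hmem] with r hr
    obtain ⟨hr0, hr2⟩ := hr
    -- positivity of the denominators
    have hbx0 : Q1 (closedBall x r) ≠ 0 := by
      intro h0
      exact hthick x hxU r hr0 (measure_mono_null (by rw [Real.closedBall_eq_Icc]; exact Ioo_subset_Icc_self) h0)
    have hby0 : Q1 (closedBall y r) ≠ 0 := by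
      intro h0
      exact hthick y hyU r hr0 (measure_mono_null (by rw [Real.closedBall_eq_Icc]; exact Ioo_subset_Icc_self) h0)
    -- the product inequality via limits
    have hprod : Q2 (closedBall x r) * Q1 (closedBall y r)
        ≤ Q2 (closedBall y r) * Q1 (closedBall x r) := by
      rw [Real.closedBall_eq_Icc, Real.closedBall_eq_Icc]
      have hxr : x - r ≤ x + r := by linarith
      have hyr : y - r ≤ y + r := by linarith
      have t1 := ENNReal.Tendsto.mul (tendsto_Ioc_Icc Q2 hxr) (Or.inr (measure_ne_top _ _))
        (tendsto_Ioc_Icc Q1 hyr) (Or.inr (measure_ne_top _ _))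
      have t2 := ENNReal.Tendsto.mul (tendsto_Ioc_Icc Q2 hyr) (Or.inr (measure_ne_top _ _))
        (tendsto_Ioc_Icc Q1 hxr) (Or.inr (measure_ne_top _ _))
      refine le_of_tendsto_of_tendsto t1 t2 ?_
      have hgap : (0:ℝ) < y - x - 2*r := by linarith
      have hev := (tendsto_one_div_add_atTop_nhds_zero_nat).eventually_lt_const hgap
      filter_upwards [hev] with n hn
      have hpos : (0:ℝ) < 1/((n:ℝ)+1) := by positivity
      exact key_ineq hac hconv (by linarith : x - r - 1/((n:ℝ)+1) ≤ x + r)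
        (by linarith : x + r ≤ y - r - 1/((n:ℝ)+1)) (by linarith : y - r - 1/((n:ℝ)+1) ≤ y + r)
    exact ennreal_div_le_div hprod hbx0 (measure_ne_top _ _) hby0 (measure_ne_top _ _)
  -- assemble the witness
  refine ⟨Q1, S.indicator 1, S.indicator f, inferInstance, ⟨?_, ?_⟩, ⟨?_, ?_⟩, ?_⟩
  · exact measurable_one.indicator hSm
  · intro B hB
    rw [lintegral_indicator hSm, Measure.restrict_restrict hSm]
    simp only [Pi.one_apply]
    rw [setLIntegral_one]
    exact (meas_inter_full hSc B).symm
  · exact (Measure.measurable_rnDeriv Q2 Q1).indicator hSm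
  · intro B hB
    rw [lintegral_indicator hSm, Measure.restrict_restrict hSm,
      Measure.setLIntegral_rnDeriv hac]
    exact (meas_inter_full (Q := Q2) hSc2 B).symm
  · intro x y hxy hx hy
    have hxS : x ∈ S := by
      by_contra h
      simp [indicator_of_notMem h] at hx
    have hyS : y ∈ S := by
      by_contra h
      simp [indicator_of_notMem h] at hy
    rw [indicator_of_mem hxS, indicator_of_mem hyS, indicator_of_mem hxS, indicator_of_mem hyS]
    simp only [Pi.one_apply, div_one]
    rcases eq_or_lt_of_le hxy with rfl | hlt
    · exact le_rfl
    · exact hmonoS x hxS y hyS hlt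

end Helpers

theorem stmt_12 (Q1 Q2 : Measure ℝ) [IsProbabilityMeasure Q1] [IsProbabilityMeasure Q2]
    (hac : Q2 ≪ Q1) :
    LikelihoodRatioLE Q1 Q2 ↔
    (∀ r s t : ℝ, r ∈ Set.range (cdfE Q1) → s ∈ Set.range (cdfE Q1) →
      t ∈ Set.range (cdfE Q1) → r < s → s < t →
      (cdfE Q2 (quantE Q1 s) - cdfE Q2 (quantE Q1 r)) / (s - r) ≤
        (cdfE Q2 (quantE Q1 t) - cdfE Q2 (quantE Q1 s)) / (t - s)) :=
  ⟨forward_dir, fun h => reverse_dir hac h⟩
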